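/- Every simple A_n(F_p)-module on which each of the generators x_1,…,x_n, y_1,…,y_n acts nilpotently is isomorphic to M = F_p[x_1,…,x_n]/(x_1^p,…,x_n^p), with x_i acting by multiplication and y_i by the partial derivative ∂/∂x_i. In particular, such a module has dimension p^n over F_p. -/

import Mathlib

noncomputable section

namespace Stmt11

/-- The generator `x_i` of the free algebra on `x_1,…,x_n,y_1,…,y_n` over `𝔽_p`. -/
abbrev xg (p n : ℕ) (i : Fin n) : FreeAlgebra (ZMod p) (Fin n ⊕ Fin n) :=
  FreeAlgebra.ι (ZMod p) (Sum.inl i)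

/-- The generator `y_i` of the free algebra on `x_1,…,x_n,y_1,…,y_n` over `𝔽_p`. -/
abbrev yg (p n : ℕ) (i : Fin n) : FreeAlgebra (ZMod p) (Fin n ⊕ Fin n) :=
  FreeAlgebra.ι (ZMod p) (Sum.inr i)

/-- The defining relations of the Weyl algebra `A_n(𝔽_p)`. -/
inductive Rel (p n : ℕ) :
    FreeAlgebra (ZMod p) (Fin n ⊕ Fin n) → FreeAlgebra (ZMod p) (Fin n ⊕ Fin n) → Prop
  | xx (i j : Fin n) : Rel p n (xg p n i * xg p n j) (xg p n j * xg p n i)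
  | yy (i j : Fin n) : Rel p n (yg p n i * yg p n j) (yg p n j * yg p n i)
  | yx (i j : Fin n) :
      Rel p n (yg p n i * xg p n j - xg p n j * yg p n i) (if i = j then 1 else 0)

/-- The Weyl algebra `A_n(𝔽_p)`. -/
abbrev WeylAlg (p n : ℕ) := RingQuot (Rel p n)

/-- `M = 𝔽_p[x_1,…,x_n]/(x_1^p,…,x_n^p)`. -/
abbrev M (p n : ℕ) :=
  MvPolynomial (Fin n) (ZMod p) ⧸
    Ideal.span (Set.range fun i : Fin n => (MvPolynomial.X i : MvPolynomial (Fin n) (ZMod p)) ^ p)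

/-- The `A_n(𝔽_p)`-module structure on `M` induced by an algebra homomorphism
`φ : A_n(𝔽_p) → End_{𝔽_p}(M)`. -/
def AMod (p n : ℕ) (φ : WeylAlg p n →ₐ[ZMod p] Module.End (ZMod p) (M p n)) :
    Module (WeylAlg p n) (M p n) :=
  Module.compHom _ φ.toRingHom

/-! ### Auxiliary material -/

open MvPolynomial

section WeylBasics

variable (p n : ℕ)

def mkA : FreeAlgebra (ZMod p) (Fin n ⊕ Fin n) →ₐ[ZMod p] WeylAlg p n :=
  RingQuot.mkAlgHom (ZMod p) (Rel p n)

def Xe (i : Fin n) : WeylAlg p n := mkA p n (xg p n i)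
def Ye (i : Fin n) : WeylAlg p n := mkA p n (yg p n i)

variable {p n}

lemma rel_xx (i j : Fin n) : Xe p n i * Xe p n j = Xe p n j * Xe p n i := by
  have := RingQuot.mkAlgHom_rel (ZMod p) (Rel.xx (p := p) i j)
  simpa [Xe, mkA, map_mul] using this

lemma rel_yy (i j : Fin n) : Ye p n i * Ye p n j = Ye p n j * Ye p n i := by
  have := RingQuot.mkAlgHom_rel (ZMod p) (Rel.yy (p := p) i j)
  simpa [Ye, mkA, map_mul] using this

lemma rel_yx (i j : Fin n) :
    Ye p n i * Xe p n j = Xe p n j * Ye p n i + (if i = j then 1 else 0) := by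
  have := RingQuot.mkAlgHom_rel (ZMod p) (Rel.yx (p := p) i j)
  rw [map_sub, map_mul, map_mul] at this
  have h2 : (RingQuot.mkAlgHom (ZMod p) (Rel p n)) (if i = j then 1 else 0)
      = (if i = j then 1 else 0 : WeylAlg p n) := by
    split <;> simp
  rw [h2] at this
  rw [← this]
  show Ye p n i * Xe p n j = Xe p n j * Ye p n i + (Ye p n i * Xe p n j - Xe p n j * Ye p n i)
  abel

variable (p n)

def alg : MvPolynomial (Fin n) (ZMod p) →ₐ[ZMod p] WeylAlg p n :=
  letI : CommRing (Algebra.adjoin (ZMod p) (Set.range (Xe p n))) :=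
    Algebra.adjoinCommRingOfComm (ZMod p)
      (by rintro a ⟨i, rfl⟩ b ⟨j, rfl⟩; exact rel_xx i j)
  (Algebra.adjoin (ZMod p) (Set.range (Xe p n))).val.comp (MvPolynomial.aeval
    (fun i => (⟨Xe p n i, Algebra.subset_adjoin ⟨i, rfl⟩⟩ :
      Algebra.adjoin (ZMod p) (Set.range (Xe p n)))))

variable {p n}

@[simp] lemma alg_X (i : Fin n) : alg p n (X i) = Xe p n i := by
  simp [alg]

@[simp] lemma alg_C (a : ZMod p) : alg p n (C a) = algebraMap (ZMod p) (WeylAlg p n) a := by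
  simp [alg]

lemma ye_alg (i : Fin n) (f : MvPolynomial (Fin n) (ZMod p)) :
    Ye p n i * alg p n f = alg p n f * Ye p n i + alg p n (pderiv i f) := by
  induction f using MvPolynomial.induction_on with
  | C a =>
    rw [alg_C, pderiv_C, map_zero, add_zero, ← Algebra.commutes a (Ye p n i)]
  | add f g hf hg =>
    simp only [map_add, mul_add, add_mul, hf, hg]
    abel
  | mul_X f j hf =>
    rw [map_mul, alg_X, ← mul_assoc, hf, add_mul, mul_assoc, rel_yx i j, mul_add,
      pderiv_mul, map_add, map_mul, map_mul, alg_X]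
    by_cases hij : i = j
    · subst hij
      simp only [pderiv_X_self, map_one, mul_one, if_true]
      noncomm_ring
    · simp only [pderiv_X_of_ne (Ne.symm hij)]
      rw [if_neg hij]
      simp only [map_zero, mul_zero, zero_mul, add_zero]
      noncomm_ring

lemma pderiv_X_pow_p (i j : Fin n) :
    pderiv j ((X i : MvPolynomial (Fin n) (ZMod p)) ^ p) = 0 := by
  rw [Derivation.leibniz_pow]
  rw [← Nat.cast_smul_eq_nsmul (ZMod p)]
  simp [ZMod.natCast_self]

lemma commute_xp_y (i j : Fin n) :
    Commute (Xe p n i ^ p) (Ye p n j) := by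
  have := ye_alg j ((X i : MvPolynomial (Fin n) (ZMod p)) ^ p)
  rw [pderiv_X_pow_p, map_zero, add_zero, map_pow, alg_X] at this
  exact this.symm

end WeylBasics

/-! ### Common kernels of commuting nilpotent endomorphisms -/

universe u

theorem exists_common_ker (R : Type*) [Ring R] (m : ℕ) :
    ∀ (V : Type u) [AddCommGroup V] [Module R V], Nontrivial V →
      ∀ S : Fin m → Module.End R V, (∀ i j, Commute (S i) (S j)) →
        (∀ i, ∃ k, S i ^ k = 0) → ∃ v : V, v ≠ 0 ∧ ∀ i, S i v = 0 := by
  induction m with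
  | zero =>
    intro V _ _ hV S _ _
    obtain ⟨v, hv⟩ := exists_ne (0 : V)
    exact ⟨v, hv, fun i => i.elim0⟩
  | succ m ih =>
    intro V _ _ hV S hcomm hnil
    set f := S 0 with hf
    obtain ⟨k, hk⟩ := hnil 0
    have hker : ∃ w : V, w ≠ 0 ∧ f w = 0 := by
      classical
      obtain ⟨v, hv⟩ := exists_ne (0 : V)
      have hex : ∃ l, (f ^ l) v = 0 := ⟨k, by rw [← hf] at hk; rw [hk]; rfl⟩
      have hl0 : Nat.find hex ≠ 0 := by
        intro h0
        have := Nat.find_spec hex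
        rw [h0] at this
        simp at this
        exact hv this
      refine ⟨(f ^ (Nat.find hex - 1)) v,
        Nat.find_min hex (m := Nat.find hex - 1) (Nat.sub_lt (Nat.pos_of_ne_zero hl0) one_pos),
        ?_⟩
      have : f ((f ^ (Nat.find hex - 1)) v) = (f ^ Nat.find hex) v := by
        have he : Nat.find hex - 1 + 1 = Nat.find hex := by omega
        rw [← Module.End.mul_apply, ← pow_succ', he]
      rw [this]
      exact Nat.find_spec hex
    set K := LinearMap.ker f with hK
    have hKne : Nontrivial K := by
      obtain ⟨w, hw0, hw⟩ := hker
      exact ⟨⟨w, LinearMap.mem_ker.mpr hw⟩, 0, by simp [hw0]⟩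
    have hmapsto : ∀ (i : Fin m) (w : V), w ∈ K → S i.succ w ∈ K := by
      intro i w hw
      rw [hK, LinearMap.mem_ker] at *
      have := (hcomm 0 i.succ).eq
      calc f (S i.succ w) = (f * S i.succ) w := rfl
        _ = (S i.succ * f) w := by rw [this]
        _ = S i.succ (f w) := rfl
        _ = 0 := by rw [hw, map_zero]
    set T : Fin m → Module.End R K := fun i => (S i.succ).restrict (hmapsto i) with hT
    have hTcomm : ∀ i j, Commute (T i) (T j) := by
      intro i j
      ext w
      have := congrArg (fun g : Module.End R V => g w.1) (hcomm i.succ j.succ).eq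
      simpa [hT, LinearMap.restrict_apply, Subtype.ext_iff] using this
    have hTnil : ∀ i, ∃ k, T i ^ k = 0 := by
      intro i
      obtain ⟨k, hk⟩ := hnil i.succ
      refine ⟨k, ?_⟩
      ext w
      have h1 : ∀ l (w : K), ((T i ^ l) w : V) = (S i.succ ^ l) w.1 := by
        intro l
        induction l with
        | zero => intro w; rfl
        | succ l ihl =>
          intro w
          rw [pow_succ, pow_succ]
          have := ihl ((T i) w)
          simp only [Module.End.mul_apply]
          rw [this]
          rfl
      rw [h1 k w, hk]
      rfl
    obtain ⟨w, hw0, hw⟩ := ih K hKne T hTcomm hTnil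
    refine ⟨w.1, fun h => hw0 (Submodule.coe_eq_zero.mp h), ?_⟩
    intro i
    rcases Fin.eq_zero_or_eq_succ i with rfl | ⟨j, rfl⟩
    · exact w.2
    · have := hw j
      have h2 : ((T j) w : V) = 0 := by rw [this]; rfl
      exact h2

/-! ### MvPolynomial helper lemmas -/

section PolyHelpers

variable {σ : Type*} {R : Type*} [CommRing R]

lemma pderiv_eq_sum (i : σ) (f : MvPolynomial σ R) :
    pderiv i f = ∑ b ∈ f.support, monomial (b - Finsupp.single i 1) (f.coeff b * b i) := by
  conv_lhs => rw [f.as_sum]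
  rw [map_sum]
  simp only [pderiv_monomial]

lemma mem_support_pderiv {i : σ} {f : MvPolynomial σ R} {m : σ →₀ ℕ}
    (hm : m ∈ (pderiv i f).support) :
    ∃ b ∈ f.support, b i ≠ 0 ∧ m = b - Finsupp.single i 1 := by
  classical
  rw [pderiv_eq_sum] at hm
  have h1 := MvPolynomial.support_sum hm
  obtain ⟨b, hb, hmb⟩ := Finset.mem_biUnion.mp h1
  rw [support_monomial] at hmb
  by_cases h0 : f.coeff b * (b i : R) = 0
  · rw [if_pos h0] at hmb; exact absurd hmb (Finset.notMem_empty m)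
  · rw [if_neg h0] at hmb
    refine ⟨b, hb, ?_, Finset.mem_singleton.mp hmb⟩
    intro hbi
    exact h0 (by rw [hbi, Nat.cast_zero, mul_zero])

lemma coeff_pderiv_sub {i : σ} {f : MvPolynomial σ R} {b : σ →₀ ℕ} (hb : b i ≠ 0) :
    (pderiv i f).coeff (b - Finsupp.single i 1) = f.coeff b * (b i : R) := by
  classical
  rw [pderiv_eq_sum, coeff_sum]
  rw [Finset.sum_eq_single b]
  · rw [coeff_monomial, if_pos rfl]
  · intro c hc hcb
    rw [coeff_monomial]
    split_ifs with h
    · by_cases hc0 : c i = 0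
      · rw [hc0, Nat.cast_zero, mul_zero]
      · exfalso
        apply hcb
        have h1 : c - Finsupp.single i 1 + Finsupp.single i 1 = c :=
          tsub_add_cancel_of_le (Finsupp.single_le_iff.mpr (Nat.one_le_iff_ne_zero.mpr hc0))
        have h2 : b - Finsupp.single i 1 + Finsupp.single i 1 = b :=
          tsub_add_cancel_of_le (Finsupp.single_le_iff.mpr (Nat.one_le_iff_ne_zero.mpr hb))
        rw [← h1, ← h2, h]
    · rfl
  · intro hbs
    rw [coeff_monomial, if_pos rfl, MvPolynomial.notMem_support_iff.mp hbs, zero_mul]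

lemma totalDegree_pderiv_lt {i : σ} {f : MvPolynomial σ R} (hf : 0 < f.totalDegree) :
    (pderiv i f).totalDegree < f.totalDegree := by
  rw [totalDegree, Finset.sup_lt_iff (by exact hf)]
  intro m hm
  obtain ⟨b, hb, hbi, rfl⟩ := mem_support_pderiv hm
  have h2 : b - Finsupp.single i 1 + Finsupp.single i 1 = b :=
    tsub_add_cancel_of_le (Finsupp.single_le_iff.mpr (Nat.one_le_iff_ne_zero.mpr hbi))
  have h3 : (b.sum fun _ e => e) =
      ((b - Finsupp.single i 1).sum fun _ e => e) + 1 := by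
    conv_lhs => rw [← h2]
    rw [Finsupp.sum_add_index' (fun _ => rfl) (fun _ _ _ => rfl)]
    simp
  have h4 := MvPolynomial.le_totalDegree hb
  omega

lemma eq_C_of_support_zero {f : MvPolynomial σ R} (h : ∀ m ∈ f.support, m = 0) :
    f = C (f.coeff 0) := by
  classical
  ext m
  rw [coeff_C]
  split_ifs with hm
  · rw [← hm]
  · rw [MvPolynomial.notMem_support_iff.mp (fun hs => hm (h m hs).symm)]

end PolyHelpers

/-! ### The ideal `(x_1^p, …, x_n^p)` and the standard basis of `M` -/

variable (p n : ℕ)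

abbrev Iw : Ideal (MvPolynomial (Fin n) (ZMod p)) :=
  Ideal.span (Set.range fun i : Fin n => (X i : MvPolynomial (Fin n) (ZMod p)) ^ p)

variable {p n}

lemma mem_Iw_iff {f : MvPolynomial (Fin n) (ZMod p)} :
    f ∈ Iw p n ↔ ∀ m ∈ f.support, ∃ i, p ≤ m i := by
  have hset : (Set.range fun i : Fin n => (X i : MvPolynomial (Fin n) (ZMod p)) ^ p)
      = (fun s => monomial s (1 : ZMod p)) '' (Set.range fun i : Fin n => Finsupp.single i p) := by
    have h0 : (fun i : Fin n => (X i : MvPolynomial (Fin n) (ZMod p)) ^ p)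
        = (fun s => monomial s (1 : ZMod p)) ∘ fun i : Fin n => Finsupp.single i p := by
      funext i
      simp [Function.comp, X_pow_eq_monomial]
    rw [h0, Set.range_comp]
  show f ∈ Ideal.span (Set.range fun i : Fin n => (X i : MvPolynomial (Fin n) (ZMod p)) ^ p) ↔ _
  rw [hset, mem_ideal_span_monomial_image]
  constructor
  · intro h m hm
    obtain ⟨si, ⟨i, rfl⟩, hle⟩ := h m hm
    exact ⟨i, Finsupp.single_le_iff.mp hle⟩
  · intro h m hm
    obtain ⟨i, hi⟩ := h m hm
    exact ⟨Finsupp.single i p, ⟨i, rfl⟩, Finsupp.single_le_iff.mpr hi⟩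

/-- exponent finsupp of a bounded exponent vector -/
def ew {p n : ℕ} (d : Fin n → Fin p) : Fin n →₀ ℕ :=
  Finsupp.equivFunOnFinite.symm (fun i => (d i : ℕ))

@[simp] lemma ew_apply {p n : ℕ} (d : Fin n → Fin p) (i : Fin n) : ew d i = (d i : ℕ) := rfl

lemma ew_injective {p n : ℕ} : Function.Injective (ew (p := p) (n := n)) := by
  intro d d' h
  funext i
  have := congrArg (fun m => m i) h
  simpa [ew, Fin.ext_iff] using this

variable (p n)

def bfun (d : Fin n → Fin p) : M p n :=
  Ideal.Quotient.mk (Iw p n) (monomial (ew d) 1)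

variable {p n}

lemma mk_smul (c : ZMod p) (x : MvPolynomial (Fin n) (ZMod p)) :
    Ideal.Quotient.mk (Iw p n) (c • x) = c • Ideal.Quotient.mk (Iw p n) x := by
  rw [← Ideal.Quotient.mkₐ_eq_mk (ZMod p), map_smul]

lemma finrank_M (hp : p.Prime) : Module.finrank (ZMod p) (M p n) = p ^ n := by
  haveI : Fact p.Prime := ⟨hp⟩
  have hindep : LinearIndependent (ZMod p) (bfun p n) := by
    rw [Fintype.linearIndependent_iff]
    intro g hg d0
    set P : MvPolynomial (Fin n) (ZMod p) := ∑ d : Fin n → Fin p, monomial (ew d) (g d) with hP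
    have hmkP : Ideal.Quotient.mk (Iw p n) P = 0 := by
      rw [hP, map_sum, ← hg]
      congr 1
      funext d
      rw [bfun, ← mk_smul, smul_monomial, smul_eq_mul, mul_one]
    have hPI : P ∈ Iw p n := Ideal.Quotient.eq_zero_iff_mem.mp hmkP
    by_contra hg0
    have hcoeff : P.coeff (ew d0) = g d0 := by
      rw [hP, coeff_sum]
      have h1 : ∀ d : Fin n → Fin p,
          coeff (ew d0) (monomial (ew d) (g d)) = if d = d0 then g d else 0 := by
        intro d
        rw [coeff_monomial]
        by_cases hdd : d = d0
        · rw [if_pos hdd, if_pos (by rw [hdd])]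
        · rw [if_neg hdd, if_neg (fun hc => hdd (ew_injective hc))]
      simp only [h1]
      rw [Finset.sum_ite_eq' Finset.univ d0 g]
      rw [if_pos (Finset.mem_univ d0)]
    have hsup : ew d0 ∈ P.support := mem_support_iff.mpr (by rw [hcoeff]; exact hg0)
    obtain ⟨i, hi⟩ := mem_Iw_iff.mp hPI (ew d0) hsup
    rw [ew_apply] at hi
    exact absurd hi (Nat.not_le.mpr (d0 i).2)
  have hspan : ⊤ ≤ Submodule.span (ZMod p) (Set.range (bfun p n)) := by
    intro z _
    obtain ⟨f, rfl⟩ := Ideal.Quotient.mk_surjective z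
    have hf : (Ideal.Quotient.mk (Iw p n)) f
        = ∑ m ∈ f.support, (Ideal.Quotient.mk (Iw p n)) (monomial m (f.coeff m)) := by
      conv_lhs => rw [f.as_sum]
      rw [map_sum]
    rw [hf]
    apply Submodule.sum_mem
    intro m hm
    by_cases hred : ∀ i, m i < p
    · have : Ideal.Quotient.mk (Iw p n) (monomial m (f.coeff m))
          = (f.coeff m) • bfun p n (fun i => ⟨m i, hred i⟩) := by
        rw [bfun, ← mk_smul, smul_monomial, smul_eq_mul, mul_one]
        congr 1
        ext i
        simp [ew]
      rw [this]
      exact Submodule.smul_mem _ _ (Submodule.subset_span ⟨_, rfl⟩)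
    · push_neg at hred
      obtain ⟨i, hi⟩ := hred
      have : monomial m (f.coeff m) ∈ Iw p n := by
        rw [mem_Iw_iff]
        intro m' hm'
        rw [support_monomial] at hm'
        split_ifs at hm' with h0
        · exact absurd hm' (Finset.notMem_empty m')
        · rw [Finset.mem_singleton.mp hm']
          exact ⟨i, hi⟩
      rw [Ideal.Quotient.eq_zero_iff_mem.mpr this]
      exact Submodule.zero_mem _
  have b : Module.Basis (Fin n → Fin p) (ZMod p) (M p n) := Module.Basis.mk hindep hspan
  rw [Module.finrank_eq_card_basis b, Fintype.card_fun]
  simp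


/-! ### The main theorem -/

set_option maxHeartbeats 2000000 in
set_option synthInstance.maxHeartbeats 400000 in
theorem stmt_11 (p n : ℕ) (hp : p.Prime)
    (φ : WeylAlg p n →ₐ[ZMod p] Module.End (ZMod p) (M p n))
    (hφx : ∀ (i : Fin n) (f : MvPolynomial (Fin n) (ZMod p)),
      φ (RingQuot.mkAlgHom (ZMod p) (Rel p n) (xg p n i)) (Ideal.Quotient.mk _ f) =
        Ideal.Quotient.mk _ (MvPolynomial.X i * f))
    (hφy : ∀ (i : Fin n) (f : MvPolynomial (Fin n) (ZMod p)),
      φ (RingQuot.mkAlgHom (ZMod p) (Rel p n) (yg p n i)) (Ideal.Quotient.mk _ f) =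
        Ideal.Quotient.mk _ (MvPolynomial.pderiv i f))
    (V : Type) [AddCommGroup V] [Module (WeylAlg p n) V]
    [Module (ZMod p) V] [IsScalarTower (ZMod p) (WeylAlg p n) V]
    [IsSimpleModule (WeylAlg p n) V]
    (hnilx : ∀ i : Fin n, ∃ k : ℕ, ∀ v : V,
      (RingQuot.mkAlgHom (ZMod p) (Rel p n) (xg p n i)) ^ k • v = 0)
    (hnily : ∀ i : Fin n, ∃ k : ℕ, ∀ v : V,
      (RingQuot.mkAlgHom (ZMod p) (Rel p n) (yg p n i)) ^ k • v = 0) :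
    Nonempty (@LinearEquiv (WeylAlg p n) (WeylAlg p n) _ _ (RingHom.id _) (RingHom.id _)
        _ _ V (M p n) _ _ _ (AMod p n φ)) ∧
      Module.finrank (ZMod p) V = p ^ n := by
  classical
  haveI : Fact p.Prime := ⟨hp⟩
  haveI hVnt : Nontrivial V := IsSimpleModule.nontrivial (WeylAlg p n) V
  -- The action of `WeylAlg` by `ZMod p`-linear endomorphisms of `V`
  let L : WeylAlg p n →+* Module.End (ZMod p) V := Module.toModuleEnd (ZMod p) V
  have Lapp : ∀ (a : WeylAlg p n) (w : V), L a w = a • w := fun _ _ => rfl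
  have Lpow : ∀ (a : WeylAlg p n) (k : ℕ) (w : V), (L a ^ k) w = a ^ k • w := by
    intro a k w
    rw [← map_pow]
    rfl
  have hnil' : ∀ a : WeylAlg p n, (∃ k, ∀ w : V, a ^ k • w = 0) → ∃ k, L a ^ k = 0 := by
    rintro a ⟨k, hk⟩
    refine ⟨k, LinearMap.ext fun w => ?_⟩
    rw [Lpow a k w, hk w]
    rfl
  have hLcomm : ∀ a b : WeylAlg p n, a * b = b * a → Commute (L a) (L b) := by
    intro a b hab
    show L a * L b = L b * L a
    rw [← map_mul, ← map_mul, hab]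
  -- the family of commuting nilpotent operators
  let Sop : Fin (n + n) → Module.End (ZMod p) V := fun k =>
    Fin.addCases (fun i => L (Xe p n i ^ p)) (fun j => L (Ye p n j)) k
  have hSopl : ∀ i : Fin n, Sop (Fin.castAdd n i) = L (Xe p n i ^ p) :=
    fun i => Fin.addCases_left i
  have hSopr : ∀ j : Fin n, Sop (Fin.natAdd n j) = L (Ye p n j) :=
    fun j => Fin.addCases_right j
  have hScomm : ∀ a b, Commute (Sop a) (Sop b) := by
    intro a b
    induction a using Fin.addCases with
    | left i =>
      induction b using Fin.addCases with
      | left j =>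
        rw [hSopl, hSopl]
        exact hLcomm _ _ (((show Commute (Xe p n i) (Xe p n j) from rel_xx i j).pow_pow p p).eq)
      | right j =>
        rw [hSopl, hSopr]
        exact hLcomm _ _ ((commute_xp_y i j).eq)
    | right i =>
      induction b using Fin.addCases with
      | left j =>
        rw [hSopr, hSopl]
        exact hLcomm _ _ ((commute_xp_y j i).symm.eq)
      | right j =>
        rw [hSopr, hSopr]
        exact hLcomm _ _ (rel_yy i j)
  have hSnil : ∀ a, ∃ k, Sop a ^ k = 0 := by
    intro a
    induction a using Fin.addCases with
    | left i =>
      obtain ⟨k, hk⟩ := hnilx i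
      have hk' : ∀ w : V, Xe p n i ^ k • w = 0 := hk
      rw [hSopl]
      refine hnil' _ ⟨k, fun w => ?_⟩
      rw [← pow_mul]
      have hle : k ≤ p * k := Nat.le_mul_of_pos_left k hp.pos
      have h1 : p * k = (p * k - k) + k := by omega
      rw [h1, pow_add, mul_smul, hk' w, smul_zero]
    | right j =>
      obtain ⟨k, hk⟩ := hnily j
      have hk' : ∀ w : V, Ye p n j ^ k • w = 0 := hk
      rw [hSopr]
      exact hnil' _ ⟨k, hk'⟩
  obtain ⟨v, hv0, hvS⟩ :=
    exists_common_ker (ZMod p) (n + n) V hVnt Sop hScomm hSnil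
  have hXpv : ∀ i : Fin n, (Xe p n i ^ p) • v = 0 := by
    intro i
    have h := hvS (Fin.castAdd n i)
    rw [hSopl] at h
    exact h
  have hYv : ∀ j : Fin n, Ye p n j • v = 0 := by
    intro j
    have h := hvS (Fin.natAdd n j)
    rw [hSopr] at h
    exact h
  -- the evaluation map θ₀ : f ↦ f(x)•v and its descent θ to M
  let θ0 : MvPolynomial (Fin n) (ZMod p) →ₗ[ZMod p] V :=
    { toFun := fun f => alg p n f • v
      map_add' := fun f g => by
        show alg p n (f + g) • v = alg p n f • v + alg p n g • v
        rw [map_add, add_smul]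
      map_smul' := fun c f => by
        show alg p n (c • f) • v = c • (alg p n f • v)
        rw [map_smul, smul_assoc] }
  have hθ0I : ∀ f ∈ Iw p n, θ0 f = 0 := by
    intro f hf
    refine Submodule.span_induction ?_ ?_ ?_ ?_ hf
    · rintro x ⟨i, rfl⟩
      show alg p n (X i ^ p) • v = 0
      rw [map_pow, alg_X]
      exact hXpv i
    · show θ0 0 = 0
      simp
    · intro x y _ _ hx hy
      show θ0 (x + y) = 0
      rw [map_add, hx, hy, add_zero]
    · intro r x _ hx
      show θ0 (r • x) = 0
      have hx' : alg p n x • v = 0 := hx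
      rw [smul_eq_mul]
      show alg p n (r * x) • v = 0
      rw [map_mul, mul_smul, hx', smul_zero]
  have hle : (Iw p n).restrictScalars (ZMod p) ≤ LinearMap.ker θ0 :=
    fun f hf => LinearMap.mem_ker.mpr (hθ0I f hf)
  let θ : M p n →ₗ[ZMod p] V :=
    (Submodule.liftQ ((Iw p n).restrictScalars (ZMod p)) θ0 hle).comp
      (Submodule.Quotient.restrictScalarsEquiv (ZMod p) (Iw p n)).symm.toLinearMap
  have hθmk : ∀ f, θ (Ideal.Quotient.mk (Iw p n) f) = alg p n f • v := by
    intro f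
    show (Submodule.liftQ ((Iw p n).restrictScalars (ZMod p)) θ0 hle)
      ((Submodule.Quotient.restrictScalarsEquiv (ZMod p) (Iw p n)).symm
        (Submodule.Quotient.mk f)) = alg p n f • v
    rw [Submodule.Quotient.restrictScalarsEquiv_symm_mk, Submodule.liftQ_apply]
    rfl
  -- equivariance of θ
  have hθeqF : ∀ (b : FreeAlgebra (ZMod p) (Fin n ⊕ Fin n)) (m : M p n),
      θ (φ (mkA p n b) m) = (mkA p n b) • θ m := by
    intro b
    induction b using FreeAlgebra.induction with
    | grade0 r =>
      intro m
      have h1 : mkA p n (algebraMap (ZMod p) _ r) = algebraMap (ZMod p) (WeylAlg p n) r :=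
        AlgHom.commutes _ r
      rw [h1, φ.commutes r, Module.algebraMap_end_apply, θ.map_smul, algebraMap_smul]
    | grade1 x =>
      cases x with
      | inl i =>
        intro m
        obtain ⟨f, rfl⟩ := Ideal.Quotient.mk_surjective m
        show θ (φ (RingQuot.mkAlgHom (ZMod p) (Rel p n) (xg p n i)) (Ideal.Quotient.mk _ f))
          = _
        rw [hφx i f, hθmk, hθmk, map_mul, alg_X, mul_smul]
        rfl
      | inr i =>
        intro m
        obtain ⟨f, rfl⟩ := Ideal.Quotient.mk_surjective m
        show θ (φ (RingQuot.mkAlgHom (ZMod p) (Rel p n) (yg p n i)) (Ideal.Quotient.mk _ f))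
          = _
        rw [hφy i f, hθmk, hθmk]
        have hd : alg p n (pderiv i f)
            = Ye p n i * alg p n f - alg p n f * Ye p n i := by
          rw [ye_alg i f]
          abel
        rw [hd, sub_smul, mul_smul, mul_smul, hYv i, smul_zero, sub_zero]
        rfl
    | mul a b ha hb =>
      intro m
      rw [map_mul, map_mul, Module.End.mul_apply, ha, hb, mul_smul]
    | add a b ha hb =>
      intro m
      rw [map_add, map_add, LinearMap.add_apply, map_add, ha, hb, add_smul]
  have hθeq : ∀ (a : WeylAlg p n) (m : M p n), θ (φ a m) = a • θ m := by
    intro a m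
    obtain ⟨b, rfl⟩ := RingQuot.mkAlgHom_surjective (ZMod p) (Rel p n) a
    exact hθeqF b m
  -- injectivity of θ
  have hθC : ∀ c : ZMod p, c ≠ 0 → θ (Ideal.Quotient.mk (Iw p n) (C c)) ≠ 0 := by
    intro c hc
    rw [hθmk, alg_C, algebraMap_smul]
    intro h
    apply hv0
    calc v = c⁻¹ • (c • v) := by rw [smul_smul, inv_mul_cancel₀ hc, one_smul]
    _ = 0 := by rw [h, smul_zero]
  have hpd : ∀ (i : Fin n) (f : MvPolynomial (Fin n) (ZMod p)),
      θ (Ideal.Quotient.mk (Iw p n) f) = 0 →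
      θ (Ideal.Quotient.mk (Iw p n) (pderiv i f)) = 0 := by
    intro i f h
    rw [← hφy i f, hθeq, h, smul_zero]
  have hconst : ∀ f : MvPolynomial (Fin n) (ZMod p), (∀ m ∈ f.support, m = 0) →
      θ (Ideal.Quotient.mk (Iw p n) f) = 0 → f = 0 := by
    intro f hsup hθf
    have hC := eq_C_of_support_zero hsup
    by_cases hc : f.coeff 0 = 0
    · rw [hC, hc, map_zero]
    · rw [hC] at hθf
      exact absurd hθf (hθC _ hc)
  have hmain : ∀ (N : ℕ) (f : MvPolynomial (Fin n) (ZMod p)), f.totalDegree ≤ N →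
      (∀ m ∈ f.support, ∀ i, m i < p) → θ (Ideal.Quotient.mk (Iw p n) f) = 0 → f = 0 := by
    intro N
    induction N with
    | zero =>
      intro f hdeg hred hθf
      refine hconst f (fun m hm => ?_) hθf
      have h1 := MvPolynomial.le_totalDegree hm
      have h2 : (m.sum fun _ e => e) = 0 := Nat.le_zero.mp (h1.trans hdeg)
      rw [Finsupp.sum] at h2
      ext i
      show m i = 0
      by_cases hi : i ∈ m.support
      · exact Finset.sum_eq_zero_iff.mp h2 i hi
      · exact Finsupp.notMem_support_iff.mp hi
    | succ N ihN =>
      intro f hdeg hred hθf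
      by_cases hsup : ∀ m ∈ f.support, m = 0
      · exact hconst f hsup hθf
      · push_neg at hsup
        obtain ⟨b, hb, hb0⟩ := hsup
        have hbi : ∃ i, b i ≠ 0 := by
          by_contra h
          push_neg at h
          exact hb0 (Finsupp.ext h)
        obtain ⟨i, hbi⟩ := hbi
        have hgθ := hpd i f hθf
        have hgred : ∀ m ∈ (pderiv i f).support, ∀ j, m j < p := by
          intro m hm j
          obtain ⟨b', hb', _, rfl⟩ := mem_support_pderiv hm
          have h3 := hred b' hb' j
          have hle2 : ((b' - Finsupp.single i 1 : Fin n →₀ ℕ)) j ≤ b' j := by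
            rw [Finsupp.tsub_apply]
            omega
          omega
        have hpos : 0 < f.totalDegree := by
          have h1 := MvPolynomial.le_totalDegree hb
          have hmem : i ∈ b.support := Finsupp.mem_support_iff.mpr hbi
          have h2 : (b.sum fun _ e => e) ≠ 0 := by
            intro h
            rw [Finsupp.sum] at h
            exact hbi (Finset.sum_eq_zero_iff.mp h i hmem)
          exact lt_of_lt_of_le (Nat.pos_of_ne_zero h2) h1
        have hdlt := totalDegree_pderiv_lt (i := i) hpos
        have hg0 : pderiv i f = 0 := ihN (pderiv i f) (by omega) hgred hgθ
        exfalso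
        have hcoeff := coeff_pderiv_sub (f := f) (b := b) hbi
        rw [hg0, coeff_zero] at hcoeff
        have hfb : f.coeff b ≠ 0 := mem_support_iff.mp hb
        have hbip : ((b i : ℕ) : ZMod p) ≠ 0 := by
          intro h
          rw [ZMod.natCast_eq_zero_iff] at h
          have h4 := Nat.le_of_dvd (Nat.pos_of_ne_zero hbi) h
          have h5 := hred b hb i
          omega
        exact (mul_ne_zero hfb hbip) hcoeff.symm
  have hinjz : ∀ m : M p n, θ m = 0 → m = 0 := by
    intro m hm
    obtain ⟨f, rfl⟩ := Ideal.Quotient.mk_surjective m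
    set Pr : (Fin n →₀ ℕ) → Prop := fun m0 => ∀ i, m0 i < p with hPr
    set f' := ∑ m0 ∈ f.support.filter Pr, monomial m0 (f.coeff m0) with hf'
    have hdiff : f - f' ∈ Iw p n := by
      have hsplit : f = f' + ∑ m0 ∈ f.support.filter (fun m0 => ¬ Pr m0),
          monomial m0 (f.coeff m0) := by
        rw [hf', Finset.sum_filter_add_sum_filter_not]
        exact f.as_sum
      rw [hsplit, add_sub_cancel_left, mem_Iw_iff]
      intro m' hm'
      have h1 := MvPolynomial.support_sum hm'
      obtain ⟨m0, hm0, hmb⟩ := Finset.mem_biUnion.mp h1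
      rw [support_monomial] at hmb
      split_ifs at hmb with h0
      · exact absurd hmb (Finset.notMem_empty m')
      · rw [Finset.mem_singleton.mp hmb]
        have h2 := (Finset.mem_filter.mp hm0).2
        rw [hPr] at h2
        obtain ⟨i, hi⟩ := not_forall.mp h2
        exact ⟨i, by omega⟩
    have hmkeq : Ideal.Quotient.mk (Iw p n) f' = Ideal.Quotient.mk (Iw p n) f := by
      rw [Ideal.Quotient.eq]
      have hneg := (Iw p n).neg_mem hdiff
      simpa using hneg
    have hredf' : ∀ m0 ∈ f'.support, ∀ i, m0 i < p := by
      intro m0 hm0 i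
      rw [hf'] at hm0
      have h1 := MvPolynomial.support_sum hm0
      obtain ⟨m1, hm1, hmb⟩ := Finset.mem_biUnion.mp h1
      rw [support_monomial] at hmb
      split_ifs at hmb with h0
      · exact absurd hmb (Finset.notMem_empty m0)
      · rw [Finset.mem_singleton.mp hmb]
        exact (Finset.mem_filter.mp hm1).2 i
    have hf'0 : f' = 0 := hmain f'.totalDegree f' le_rfl hredf' (by rw [hmkeq]; exact hm)
    rw [← hmkeq, hf'0, map_zero]
  have hinj : Function.Injective θ := by
    intro a b h
    have h1 : θ (a - b) = 0 := by rw [map_sub, h, sub_self]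
    exact sub_eq_zero.mp (hinjz _ h1)
  -- surjectivity via simplicity
  letI instM : Module (WeylAlg p n) (M p n) := AMod p n φ
  let Nsub : Submodule (WeylAlg p n) V :=
    { carrier := Set.range θ
      add_mem' := by rintro _ _ ⟨a, rfl⟩ ⟨b, rfl⟩; exact ⟨a + b, map_add θ a b⟩
      zero_mem' := ⟨0, map_zero θ⟩
      smul_mem' := by
        rintro a _ ⟨m, rfl⟩
        exact ⟨φ a m, hθeq a m⟩ }
  have hNv : v ∈ Nsub := ⟨Ideal.Quotient.mk _ 1, by rw [hθmk, map_one, one_smul]⟩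
  have hsurj : Function.Surjective θ := by
    rcases eq_bot_or_eq_top Nsub with hbot | htop
    · rw [hbot] at hNv
      exact absurd ((Submodule.mem_bot _).mp hNv) hv0
    · intro w
      have hw : w ∈ Nsub := by rw [htop]; trivial
      exact hw
  -- conclusion
  constructor
  · let θA : @LinearMap (WeylAlg p n) (WeylAlg p n) _ _ (RingHom.id _) (M p n) V _ _ instM _ :=
      { toFun := θ
        map_add' := map_add θ
        map_smul' := fun a m => hθeq a m }
    have hbij : Function.Bijective θA := ⟨hinj, hsurj⟩
    exact ⟨(LinearEquiv.ofBijective θA hbij).symm⟩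
  · have eZ : M p n ≃ₗ[ZMod p] V := LinearEquiv.ofBijective θ ⟨hinj, hsurj⟩
    rw [← LinearEquiv.finrank_eq eZ]
    exact finrank_M hp

end Stmt11
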